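/- Fix d ∈ ℝ. The infimum of the transition energy ∫₀^∞ ((f(t)−1)² + (f''(t))²) dt over all twice continuously differentiable functions f : ℝ → ℝ with f(0) = d, f'(0) = 0, and f(t) → 1 as t → ∞, equals √2·(d−1)², and it is attained (for instance by f(t) = 1 − (1−d)·√2·exp(−t/√2)·cos(t/√2 − π/4) up to normalization, i.e. by 1 + (d−1)(1 − f₀(t)) where f₀ is the optimal profile). -/

import Mathlib

open MeasureTheory Filter
open scoped ENNReal

/-- The optimal profile `f₀(t) = 1 − √2·exp(−t/√2)·cos(t/√2 − π/4)`. -/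
noncomputable def optProfile : ℝ → ℝ := fun t =>
  1 - Real.sqrt 2 * Real.exp (-t / Real.sqrt 2) * Real.cos (t / Real.sqrt 2 - Real.pi / 4)

/-- The transition energy of `f : ℝ → ℝ`, as a Lebesgue lower integral over `(0,∞)`. -/
noncomputable def transitionEnergy (f : ℝ → ℝ) : ℝ≥0∞ :=
  ∫⁻ t in Set.Ioi (0 : ℝ),
    ENNReal.ofReal ((f t - 1) ^ 2 + (deriv (deriv f) t) ^ 2)

noncomputable def cand (k : ℝ) : ℝ → ℝ := fun t =>
  1 + k * (Real.sqrt 2 * Real.exp (-t / Real.sqrt 2) * Real.cos (t / Real.sqrt 2 - Real.pi / 4))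

noncomputable def cand1 (k : ℝ) : ℝ → ℝ := fun t =>
  -(k * (Real.sqrt 2 * Real.exp (-t / Real.sqrt 2) * Real.sin (t / Real.sqrt 2)))

noncomputable def cand2 (k : ℝ) : ℝ → ℝ := fun t =>
  -(k * (Real.sqrt 2 * Real.exp (-t / Real.sqrt 2) * Real.cos (t / Real.sqrt 2 + Real.pi / 4)))

lemma s2 : Real.sqrt 2 * Real.sqrt 2 = 2 := Real.mul_self_sqrt (by norm_num)
lemma s2pos : (0:ℝ) < Real.sqrt 2 := Real.sqrt_pos.mpr (by norm_num)

lemma hasDerivAt_cand (k t : ℝ) : HasDerivAt (cand k) (cand1 k t) t := by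
  have h1 : HasDerivAt (fun t : ℝ => -t / Real.sqrt 2) (-1 / Real.sqrt 2) t :=
    ((hasDerivAt_id t).neg).div_const _
  have h2 : HasDerivAt (fun t : ℝ => t / Real.sqrt 2 - Real.pi / 4) (1 / Real.sqrt 2) t := by
    simpa using ((hasDerivAt_id t).div_const (Real.sqrt 2)).sub_const (Real.pi / 4)
  have hexp := h1.exp
  have hcos := h2.cos
  have hp := (hexp.mul hcos).const_mul (k * Real.sqrt 2)
  have := hp.const_add 1
  convert this using 1
  · rfl
  · rfl
  · funext x; simp [cand]; ring
  · simp only [cand1]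
    have e1 : Real.cos (t / Real.sqrt 2 - Real.pi / 4)
        = Real.sqrt 2 / 2 * (Real.cos (t / Real.sqrt 2) + Real.sin (t / Real.sqrt 2)) := by
      rw [Real.cos_sub, Real.cos_pi_div_four, Real.sin_pi_div_four]; ring
    have e2 : Real.sin (t / Real.sqrt 2 - Real.pi / 4)
        = Real.sqrt 2 / 2 * (Real.sin (t / Real.sqrt 2) - Real.cos (t / Real.sqrt 2)) := by
      rw [Real.sin_sub, Real.cos_pi_div_four, Real.sin_pi_div_four]; ring
    rw [e1, e2]
    have h := s2
    field_simp
    ring_nf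


lemma hasDerivAt_cand1 (k t : ℝ) : HasDerivAt (cand1 k) (cand2 k t) t := by
  have h1 : HasDerivAt (fun t : ℝ => -t / Real.sqrt 2) (-1 / Real.sqrt 2) t :=
    ((hasDerivAt_id t).neg).div_const _
  have h2 : HasDerivAt (fun t : ℝ => t / Real.sqrt 2) (1 / Real.sqrt 2) t :=
    (hasDerivAt_id t).div_const (Real.sqrt 2)
  have hp := (((h1.exp).mul h2.sin).const_mul (k * Real.sqrt 2)).neg
  convert hp using 1
  · rfl
  · rfl
  · funext x; simp [cand1]; ring
  · simp only [cand2]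
    have e1 : Real.cos (t / Real.sqrt 2 + Real.pi / 4)
        = Real.sqrt 2 / 2 * (Real.cos (t / Real.sqrt 2) - Real.sin (t / Real.sqrt 2)) := by
      rw [Real.cos_add, Real.cos_pi_div_four, Real.sin_pi_div_four]; ring
    rw [e1]
    have h := s2
    field_simp
    ring_nf
    rw [Real.sq_sqrt (by norm_num : (0:ℝ) ≤ 2)]; ring


lemma contDiff_cand (k : ℝ) : ContDiff ℝ 2 (cand k) := by
  unfold cand
  exact contDiff_const.add (contDiff_const.mul
    (((contDiff_const.mul ((contDiff_id.neg.div_const _).exp)).mul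
      (((contDiff_id.div_const _).sub contDiff_const).cos))))

lemma deriv_cand (k : ℝ) : deriv (cand k) = cand1 k :=
  funext fun t => (hasDerivAt_cand k t).deriv

lemma deriv2_cand (k : ℝ) : deriv (deriv (cand k)) = cand2 k := by
  rw [deriv_cand]; exact funext fun t => (hasDerivAt_cand1 k t).deriv

lemma cand_zero (k : ℝ) : cand k 0 = 1 + k := by
  simp [cand, Real.cos_pi_div_four]
  linear_combination (k/2) * s2

lemma cand1_zero (k : ℝ) : cand1 k 0 = 0 := by simp [cand1]

lemma exp_tendsto : Tendsto (fun t : ℝ => Real.exp (-t / Real.sqrt 2)) atTop (nhds 0) :=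
  Real.tendsto_exp_atBot.comp (tendsto_neg_atTop_atBot.atBot_div_const s2pos)

lemma cand_tendsto (k : ℝ) : Tendsto (cand k) atTop (nhds 1) := by
  have h0 : Tendsto (fun t : ℝ => k * (Real.sqrt 2 * Real.exp (-t / Real.sqrt 2) *
      Real.cos (t / Real.sqrt 2 - Real.pi / 4))) atTop (nhds 0) := by
    refine squeeze_zero_norm (a := fun t => |k| * Real.sqrt 2 * Real.exp (-t / Real.sqrt 2)) ?_ ?_
    · intro t
      have hc : |Real.cos (t / Real.sqrt 2 - Real.pi / 4)| ≤ 1 := Real.abs_cos_le_one _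
      have he : (0:ℝ) ≤ Real.exp (-t / Real.sqrt 2) := (Real.exp_pos _).le
      have : ‖k * (Real.sqrt 2 * Real.exp (-t / Real.sqrt 2) *
            Real.cos (t / Real.sqrt 2 - Real.pi / 4))‖
          = |k| * Real.sqrt 2 * Real.exp (-t / Real.sqrt 2) *
            |Real.cos (t / Real.sqrt 2 - Real.pi / 4)| := by
        rw [Real.norm_eq_abs, abs_mul, abs_mul, abs_mul,
          abs_of_nonneg s2pos.le, abs_of_nonneg he]
        ring
      rw [this]
      nlinarith [mul_le_mul_of_nonneg_left hc
        (by positivity : (0:ℝ) ≤ |k| * Real.sqrt 2 * Real.exp (-t / Real.sqrt 2))]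
    · simpa using (exp_tendsto.const_mul (|k| * Real.sqrt 2))
  have := h0.const_add 1
  unfold cand; simpa using this

lemma cand_integrand (k t : ℝ) :
    (cand k t - 1) ^ 2 + (deriv (deriv (cand k)) t) ^ 2
      = 2 * k ^ 2 * Real.exp (-(Real.sqrt 2) * t) := by
  rw [deriv2_cand]
  simp only [cand, cand2]
  have e1 : Real.cos (t / Real.sqrt 2 - Real.pi / 4)
      = Real.sqrt 2 / 2 * (Real.cos (t / Real.sqrt 2) + Real.sin (t / Real.sqrt 2)) := by
    rw [Real.cos_sub, Real.cos_pi_div_four, Real.sin_pi_div_four]; ring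
  have e2 : Real.cos (t / Real.sqrt 2 + Real.pi / 4)
      = Real.sqrt 2 / 2 * (Real.cos (t / Real.sqrt 2) - Real.sin (t / Real.sqrt 2)) := by
    rw [Real.cos_add, Real.cos_pi_div_four, Real.sin_pi_div_four]; ring
  have hexp : Real.exp (-(Real.sqrt 2) * t) = Real.exp (-t / Real.sqrt 2) ^ 2 := by
    rw [sq, ← Real.exp_add]
    congr 1
    rw [← add_div, eq_div_iff (ne_of_gt s2pos)]
    linear_combination (-t) * s2
  have hpy := Real.sin_sq_add_cos_sq (t / Real.sqrt 2)
  rw [e1, e2, hexp]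
  have h := s2
  linear_combination (2*k^2*Real.exp (-t/Real.sqrt 2)^2) * hpy +
    (k^2*Real.exp (-t/Real.sqrt 2)^2*(Real.sin (t/Real.sqrt 2)^2+Real.cos (t/Real.sqrt 2)^2)*(Real.sqrt 2*Real.sqrt 2+2)/2) * h

lemma exp_neg_sqrt2_tendsto :
    Tendsto (fun t : ℝ => Real.exp (-(Real.sqrt 2) * t)) atTop (nhds 0) :=
  Real.tendsto_exp_atBot.comp
    (tendsto_id.const_mul_atTop_of_neg (neg_neg_iff_pos.2 s2pos))

lemma energy_cand (k : ℝ) :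
    transitionEnergy (cand k) = ENNReal.ofReal (Real.sqrt 2 * k ^ 2) := by
  unfold transitionEnergy
  simp only [cand_integrand]
  have hint : IntegrableOn (fun t : ℝ => 2 * k ^ 2 * Real.exp (-(Real.sqrt 2) * t))
      (Set.Ioi (0:ℝ)) := (exp_neg_integrableOn_Ioi 0 s2pos).const_mul _
  have hd : ∀ x ∈ Set.Ici (0:ℝ),
      HasDerivAt (fun t => -(Real.sqrt 2 * k ^ 2) * Real.exp (-(Real.sqrt 2) * t))
        (2 * k ^ 2 * Real.exp (-(Real.sqrt 2) * x)) x := by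
    intro x _
    have h1 : HasDerivAt (fun t : ℝ => -(Real.sqrt 2) * t) (-(Real.sqrt 2)) x := by
      simpa using (hasDerivAt_id x).const_mul (-(Real.sqrt 2))
    have := (h1.exp).const_mul (-(Real.sqrt 2 * k ^ 2))
    convert this using 1
    rfl
    rfl
    linear_combination (-(k ^ 2 * Real.exp (-(Real.sqrt 2) * x))) * s2
  have htend : Tendsto (fun t : ℝ => -(Real.sqrt 2 * k ^ 2) * Real.exp (-(Real.sqrt 2) * t))
      atTop (nhds 0) := by
    simpa using exp_neg_sqrt2_tendsto.const_mul (-(Real.sqrt 2 * k ^ 2))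
  have hval : ∫ t in Set.Ioi (0:ℝ), 2 * k ^ 2 * Real.exp (-(Real.sqrt 2) * t)
      = Real.sqrt 2 * k ^ 2 := by
    rw [MeasureTheory.integral_Ioi_of_hasDerivAt_of_tendsto' hd hint htend]
    simp
  rw [← MeasureTheory.ofReal_integral_eq_lintegral_ofReal hint
    (Filter.Eventually.of_forall (fun x => by positivity)), hval]

lemma escape_false (f G : ℝ → ℝ) (hf : ∀ t, HasDerivAt f (G t) t) (hG : Continuous G)
    (L δ A : ℝ) (hδ : 0 < δ) (hlim : Tendsto f atTop (nhds L))
    (h : ∀ t, A ≤ t → δ ≤ G t) : False := by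
  have key : ∀ t, A ≤ t → f A + δ * (t - A) ≤ f t := by
    intro t ht
    have hFTC : ∫ x in A..t, G x = f t - f A :=
      intervalIntegral.integral_eq_sub_of_hasDerivAt (fun x _ => hf x)
        (hG.intervalIntegrable A t)
    have hconst : ∫ x in A..t, (δ : ℝ) = δ * (t - A) := by
      simp [intervalIntegral.integral_const]; ring
    have hmono : ∫ x in A..t, (δ : ℝ) ≤ ∫ x in A..t, G x := by
      apply intervalIntegral.integral_mono_on ht intervalIntegrable_const
        (hG.intervalIntegrable A t)
      intro x hx; exact h x hx.1
    rw [hconst, hFTC] at hmono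
    linarith
  obtain ⟨B, hB⟩ := eventually_atTop.mp (hlim.eventually_lt_const (lt_add_one L))
  set t0 := max A B + |(L + 1 - f A) / δ| + 1 with ht0
  have habs : (0:ℝ) ≤ |(L + 1 - f A) / δ| := abs_nonneg _
  have ht0A : A ≤ t0 := by
    have := le_max_left A B; simp only [ht0]; linarith
  have ht0B : B ≤ t0 := by
    have := le_max_right A B; simp only [ht0]; linarith
  have h1 := key t0 ht0A
  have h2 := hB t0 ht0B
  have h3 : L + 1 - f A ≤ δ * |(L + 1 - f A) / δ| := by
    calc L + 1 - f A ≤ |L + 1 - f A| := le_abs_self _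
      _ = δ * (|L + 1 - f A| / δ) := by field_simp
      _ = δ * |(L + 1 - f A) / δ| := by rw [abs_div, abs_of_pos hδ]
  have h4 : δ * (t0 - A) ≥ δ * (|(L + 1 - f A) / δ| + 1) := by
    apply mul_le_mul_of_nonneg_left _ hδ.le
    have := le_max_left A B; simp only [ht0]; linarith
  have h5 : δ * (|(L + 1 - f A) / δ| + 1) = δ * |(L + 1 - f A) / δ| + δ := by ring
  clear_value t0
  linarith

lemma deriv_small (f G : ℝ → ℝ) (hf : ∀ t, HasDerivAt f (G t) t) (hG : Continuous G)
    (L : ℝ) (hlim : Tendsto f atTop (nhds L)) (δ : ℝ) (hδ : 0 < δ) (A : ℝ) :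
    ∃ t, A ≤ t ∧ |G t| < δ := by
  by_contra hcon
  push_neg at hcon
  have hA : δ ≤ |G A| := hcon A le_rfl
  have hsign : (∀ t, A ≤ t → δ ≤ G t) ∨ (∀ t, A ≤ t → δ ≤ -G t) := by
    rcases le_abs.mp hA with hpos | hneg
    · left; intro t ht
      rcases le_abs.mp (hcon t ht) with h | h
      · exact h
      · exfalso
        have hmem : (0:ℝ) ∈ Set.Icc (G t) (G A) := ⟨by linarith, by linarith⟩
        obtain ⟨c, hc, hc0⟩ := intermediate_value_Icc' ht hG.continuousOn hmem
        have := hcon c hc.1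
        rw [hc0] at this; simp at this; linarith
    · right; intro t ht
      rcases le_abs.mp (hcon t ht) with h | h
      · exfalso
        have hmem : (0:ℝ) ∈ Set.Icc (G A) (G t) := ⟨by linarith, by linarith⟩
        obtain ⟨c, hc, hc0⟩ := intermediate_value_Icc ht hG.continuousOn hmem
        have := hcon c hc.1
        rw [hc0] at this; simp at this; linarith
      · exact h
  rcases hsign with h | h
  · exact escape_false f G hf hG L δ A hδ hlim h
  · exact escape_false (fun t => -f t) (fun t => -G t) (fun t => (hf t).neg)
      hG.neg (-L) δ A hδ hlim.neg h

lemma energy_lower (d : ℝ) (f : ℝ → ℝ) (hf : ContDiff ℝ 2 f) (h0 : f 0 = d)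
    (h1 : deriv f 0 = 0) (hlim : Tendsto f atTop (nhds 1)) :
    ENNReal.ofReal (Real.sqrt 2 * (d - 1) ^ 2) ≤ transitionEnergy f := by
  have hdiff : Differentiable ℝ f := hf.differentiable (by norm_num)
  have hf' : ContDiff ℝ (1 + 1) f := by
    convert hf using 2
    exact one_add_one_eq_two
  obtain ⟨-, -, hf1⟩ := contDiff_succ_iff_deriv.mp hf'
  have hdiff1 : Differentiable ℝ (deriv f) := hf1.differentiable one_ne_zero
  have hf1' : ContDiff ℝ (0 + 1) (deriv f) := by
    convert hf1 using 2
    · rfl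
    · rfl
    · exact zero_add 1
  obtain ⟨-, -, hf0⟩ := contDiff_succ_iff_deriv.mp hf1'
  have hcont2 : Continuous (deriv (deriv f)) := hf0.continuous
  have hcont1 : Continuous (deriv f) := hf1.continuous
  have hcontf : Continuous f := hf.continuous
  have hD : ∀ t, HasDerivAt f (deriv f t) t := fun t => (hdiff t).hasDerivAt
  have hD1 : ∀ t, HasDerivAt (deriv f) (deriv (deriv f) t) t := fun t => (hdiff1 t).hasDerivAt
  set s : ℝ := Real.sqrt 2 with hs
  have hs2 : s ^ 2 = 2 := Real.sq_sqrt (by norm_num)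
  set W : ℝ → ℝ := fun t =>
    s * (f t - 1) ^ 2 + 2 * (f t - 1) * deriv f t + s * (deriv f t) ^ 2 with hWdef
  have hW : ∀ t, HasDerivAt W
      (((f t - 1) + s * deriv f t + deriv (deriv f) t) ^ 2
        - ((f t - 1) ^ 2 + (deriv (deriv f) t) ^ 2)) t := by
    intro t
    have e1 : HasDerivAt (fun u => f u - 1) (deriv f t) t := (hD t).sub_const 1
    have big := (((e1.pow 2).const_mul s).add
      (((e1.mul (hD1 t)).const_mul 2))).add (((hD1 t).pow 2).const_mul s)
    convert big using 1
    · rfl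
    · rfl
    · funext u; simp only [hWdef, Pi.add_apply, Pi.mul_apply, Pi.pow_apply]; ring
    · linear_combination ((deriv f t) ^ 2) * hs2
  have hWcont : Continuous (fun t =>
      ((f t - 1) + s * deriv f t + deriv (deriv f) t) ^ 2
        - ((f t - 1) ^ 2 + (deriv (deriv f) t) ^ 2)) := by
    fun_prop
  have hencont : Continuous (fun t => (f t - 1) ^ 2 + (deriv (deriv f) t) ^ 2) := by
    fun_prop
  have hsqcont : Continuous (fun t =>
      ((f t - 1) + s * deriv f t + deriv (deriv f) t) ^ 2) := by
    fun_prop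
  have hW0 : W 0 = s * (d - 1) ^ 2 := by
    simp only [hWdef, h0, h1]; ring
  have hT : ∀ T : ℝ, 0 < T →
      ENNReal.ofReal (s * (d - 1) ^ 2 - W T) ≤ transitionEnergy f := by
    intro T hTpos
    have hFTC : ∫ t in (0:ℝ)..T,
        (((f t - 1) + s * deriv f t + deriv (deriv f) t) ^ 2
          - ((f t - 1) ^ 2 + (deriv (deriv f) t) ^ 2)) = W T - W 0 :=
      intervalIntegral.integral_eq_sub_of_hasDerivAt (fun x _ => hW x)
        (hWcont.intervalIntegrable _ _)
    have hsplit : ∫ t in (0:ℝ)..T,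
        (((f t - 1) + s * deriv f t + deriv (deriv f) t) ^ 2
          - ((f t - 1) ^ 2 + (deriv (deriv f) t) ^ 2))
        = (∫ t in (0:ℝ)..T, ((f t - 1) + s * deriv f t + deriv (deriv f) t) ^ 2)
          - ∫ t in (0:ℝ)..T, ((f t - 1) ^ 2 + (deriv (deriv f) t) ^ 2) :=
      intervalIntegral.integral_sub (hsqcont.intervalIntegrable _ _)
        (hencont.intervalIntegrable _ _)
    have hsq : 0 ≤ ∫ t in (0:ℝ)..T,
        ((f t - 1) + s * deriv f t + deriv (deriv f) t) ^ 2 :=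
      intervalIntegral.integral_nonneg hTpos.le (fun x _ => sq_nonneg _)
    have hlow : s * (d - 1) ^ 2 - W T
        ≤ ∫ t in (0:ℝ)..T, ((f t - 1) ^ 2 + (deriv (deriv f) t) ^ 2) := by
      rw [hsplit] at hFTC
      linarith [hW0 ▸ hFTC]
    have hIoc : ∫ t in (0:ℝ)..T, ((f t - 1) ^ 2 + (deriv (deriv f) t) ^ 2)
        = ∫ t in Set.Ioc (0:ℝ) T, ((f t - 1) ^ 2 + (deriv (deriv f) t) ^ 2) :=
      intervalIntegral.integral_of_le hTpos.le
    have hIntOn : IntegrableOn (fun t => (f t - 1) ^ 2 + (deriv (deriv f) t) ^ 2)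
        (Set.Ioc (0:ℝ) T) := hencont.integrableOn_Ioc
    calc ENNReal.ofReal (s * (d - 1) ^ 2 - W T)
        ≤ ENNReal.ofReal (∫ t in Set.Ioc (0:ℝ) T,
            ((f t - 1) ^ 2 + (deriv (deriv f) t) ^ 2)) := by
          apply ENNReal.ofReal_le_ofReal; rw [← hIoc]; exact hlow
      _ = ∫⁻ t in Set.Ioc (0:ℝ) T,
            ENNReal.ofReal ((f t - 1) ^ 2 + (deriv (deriv f) t) ^ 2) :=
          MeasureTheory.ofReal_integral_eq_lintegral_ofReal hIntOn
            (Filter.Eventually.of_forall (fun x => by positivity))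
      _ ≤ ∫⁻ t in Set.Ioi (0:ℝ),
            ENNReal.ofReal ((f t - 1) ^ 2 + (deriv (deriv f) t) ^ 2) :=
          lintegral_mono_set Set.Ioc_subset_Ioi_self
      _ = transitionEnergy f := rfl
  have hWsmall : ∀ ε : ℝ, 0 < ε → ∃ T, 0 < T ∧ W T < ε := by
    intro ε hε
    have hsp : (0:ℝ) < s + 1 := by positivity
    set δ : ℝ := Real.sqrt (ε / (2 * (s + 1))) with hδdef
    have hδpos : 0 < δ := Real.sqrt_pos.mpr (by positivity)
    have hδsq : δ ^ 2 = ε / (2 * (s + 1)) := Real.sq_sqrt (by positivity)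
    obtain ⟨A, hA⟩ := Metric.tendsto_atTop.mp hlim δ hδpos
    obtain ⟨T, hTA, hTd⟩ := deriv_small f (deriv f) hD hcont1 1 hlim δ hδpos (max A 1)
    refine ⟨T, lt_of_lt_of_le zero_lt_one (le_trans (le_max_right A 1) hTA), ?_⟩
    have hg : |f T - 1| < δ := by
      have := hA T (le_trans (le_max_left A 1) hTA)
      rwa [Real.dist_eq] at this
    have hg1 := abs_lt.mp hg
    have hg2 := abs_lt.mp hTd
    have hb1 : (f T - 1) ^ 2 < δ ^ 2 := by nlinarith
    have hb2 : (deriv f T) ^ 2 < δ ^ 2 := by nlinarith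
    have hWle : W T ≤ (s + 1) * ((f T - 1) ^ 2 + (deriv f T) ^ 2) := by
      simp only [hWdef]
      nlinarith [sq_nonneg (f T - 1 - deriv f T)]
    have : (s + 1) * ((f T - 1) ^ 2 + (deriv f T) ^ 2) < (s + 1) * (2 * δ ^ 2) := by
      apply mul_lt_mul_of_pos_left (by linarith) hsp
    have heq : (s + 1) * (2 * δ ^ 2) = ε := by
      rw [hδsq]; field_simp
    linarith
  have hseq : Tendsto (fun n : ℕ => ENNReal.ofReal (s * (d - 1) ^ 2 - 1 / (n + 1)))
      atTop (nhds (ENNReal.ofReal (s * (d - 1) ^ 2))) := by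
    apply (ENNReal.continuous_ofReal.tendsto _).comp
    have : Tendsto (fun n : ℕ => 1 / ((n : ℝ) + 1)) atTop (nhds 0) :=
      tendsto_one_div_add_atTop_nhds_zero_nat
    simpa using (tendsto_const_nhds (x := s * (d - 1) ^ 2)).sub this
  apply le_of_tendsto hseq
  apply Filter.Eventually.of_forall
  intro n
  obtain ⟨T, hTpos, hWT⟩ := hWsmall (1 / (n + 1)) (by positivity)
  calc ENNReal.ofReal (s * (d - 1) ^ 2 - 1 / (n + 1))
      ≤ ENNReal.ofReal (s * (d - 1) ^ 2 - W T) :=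
        ENNReal.ofReal_le_ofReal (by linarith)
    _ ≤ transitionEnergy f := hT T hTpos

/-- For each `d ∈ ℝ`, the infimum of the transition energy over all C² functions
with `f(0) = d`, `f'(0) = 0`, `f(t) → 1` as `t → ∞` equals `√2·(d−1)²`, and it is
attained by `t ↦ 1 + (d−1)(1 − f₀(t))` where `f₀` is the optimal profile. -/
theorem optimal_profile_infimum_d (d : ℝ) :
    sInf { E : ℝ≥0∞ | ∃ f : ℝ → ℝ, ContDiff ℝ 2 f ∧ f 0 = d ∧ deriv f 0 = 0 ∧
          Tendsto f atTop (nhds 1) ∧ E = transitionEnergy f } =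
        ENNReal.ofReal (Real.sqrt 2 * (d - 1) ^ 2) ∧
      transitionEnergy (fun t => 1 + (d - 1) * (1 - optProfile t)) =
        ENNReal.ofReal (Real.sqrt 2 * (d - 1) ^ 2) := by
  have hfun : (fun t => 1 + (d - 1) * (1 - optProfile t)) = cand (d - 1) := by
    funext t; simp only [cand, optProfile]; ring
  have hatt : transitionEnergy (fun t => 1 + (d - 1) * (1 - optProfile t))
      = ENNReal.ofReal (Real.sqrt 2 * (d - 1) ^ 2) := by
    rw [hfun, energy_cand]
  refine ⟨le_antisymm ?_ ?_, hatt⟩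
  · apply sInf_le
    exact ⟨cand (d - 1), contDiff_cand _, by rw [cand_zero]; ring,
      by rw [deriv_cand]; exact cand1_zero _, cand_tendsto _, (energy_cand _).symm⟩
  · apply le_sInf
    rintro E ⟨f, hf, h0, h1, hlim, rfl⟩
    exact energy_lower d f hf h0 h1 hlim
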